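/- Let a₁, a₂, a₃ > 0 be real numbers, let t₁, t₃ ∈ ℝ, and let M = [[p, q],[r, s]] be a real 2×2 matrix with determinant 1 and p ≠ 0. Then there exist t₁', t₂', t₃' ∈ ℝ with t₂' ≠ 0 such that [[t₁', −1/a₁],[a₁, 0]] · [[t₂', −1/a₂],[a₂, 0]] · [[t₃', −1/a₃],[a₃, 0]] = [[t₁, −1/a₁],[a₁, 0]] · M · [[t₃, −1/a₃],[a₃, 0]]. -/

import Mathlib

/-- For a₁,a₂,a₃ > 0, t₁,t₃ ∈ ℝ and M = [[p,q],[r,s]] with det M = 1 and p ≠ 0,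
there exist t₁',t₂',t₃' with t₂' ≠ 0 such that the product of the three J-type matrices with
parameters (t₁',a₁), (t₂',a₂), (t₃',a₃) equals [[t₁,−1/a₁],[a₁,0]]·M·[[t₃,−1/a₃],[a₃,0]]. -/
theorem stmt9 (a₁ a₂ a₃ : ℝ) (ha₁ : 0 < a₁) (ha₂ : 0 < a₂) (ha₃ : 0 < a₃)
    (t₁ t₃ : ℝ) (M : Matrix (Fin 2) (Fin 2) ℝ) (hdet : M.det = 1) (hp : M 0 0 ≠ 0) :
    ∃ t₁' t₂' t₃' : ℝ, t₂' ≠ 0 ∧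
      !![t₁', -1/a₁; a₁, 0] * !![t₂', -1/a₂; a₂, 0] * !![t₃', -1/a₃; a₃, 0] =
        !![t₁, -1/a₁; a₁, 0] * M * !![t₃, -1/a₃; a₃, 0] := by
  set p := M 0 0
  set q := M 0 1
  set r := M 1 0
  set s := M 1 1
  have hdet' : p * s - q * r = 1 := by
    rw [Matrix.det_fin_two] at hdet; linarith [hdet]
  refine ⟨t₁ + (a₂ - r) / (a₁ * p), p, t₃ + a₃ * (q * a₂ + 1) / (a₂ * p), hp, ?_⟩
  have hM : M = !![p, q; r, s] := by
    ext i j; fin_cases i <;> fin_cases j <;> rfl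
  rw [hM]
  have h1 := ha₁.ne'
  have h2 := ha₂.ne'
  have h3 := ha₃.ne'
  ext i j
  fin_cases i <;> fin_cases j <;>
    simp [Matrix.mul_apply, Fin.sum_univ_succ] <;>
    field_simp <;> ring_nf
  · linear_combination (a₂ * a₃) * hdet'
  · tauto
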